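/- The Teia potential update condition holds for a lazy request served by a matched server: let (M,d) be a metric space, k ≥ 2, let s_1,…,s_k and a_1,…,a_k be points of M with s_j = a_j for every j ≠ 1, and let E_1,…,E_k ∈ ℝ. Suppose the request is r = a_1 and E_2 + d(s_2, a_1) ≤ E_1 + d(s_1, a_1), so server 2 serves the request. Define the new configuration obtained by moving server 2 to a_1 and re-matching: ŝ_1 = s_1, â_1 = s_2, ŝ_2 = â_2 = a_1, and ŝ_j = â_j = s_j for all j ≥ 3; define the new handicaps Ê_j := E_j + α(a_1; s_2, s_j) for all j, where α(p;q,r) := (d(p,q)+d(p,r)−d(q,r))/2 (note Ê_2 = E_2 + d(s_2,a_1)). Then Φ(ŝ,â,Ê) − Φ(s,a,E) + d(s_2,a_1) ≤ 0. -/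

import Mathlib

/-- The isolation index `α(p; q, r) = (d(p,q) + d(p,r) − d(q,r)) / 2`. -/
noncomputable def alpha {M : Type*} [MetricSpace M] (p q r : M) : ℝ :=
  (dist p q + dist p r - dist q r) / 2

/-- The Teia potential `Φ(s, a, E)`:
`Σ_{i<j} d(s_i,s_j) + k·Σ_i d(s_i,a_i) + 2·Σ_i (e_max − E_i)`,
where `ε^i = Σ_j α(s_j; a_j, s_i)`, `e_i = E_i − ε^i`, and
`e_max = max_i e_i`. -/
noncomputable def teiaPhi {M : Type*} [MetricSpace M] {k : ℕ}
    (s a : Fin k → M) (E : Fin k → ℝ) : ℝ :=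
  (∑ i : Fin k, ∑ j ∈ Finset.Ioi i, dist (s i) (s j))
    + k * ∑ i : Fin k, dist (s i) (a i)
    + 2 * ∑ i : Fin k,
        ((⨆ j : Fin k, (E j - ∑ l : Fin k, alpha (s l) (a l) (s j))) - E i)

open Finset

lemma alpha_self {M : Type*} [MetricSpace M] (p x : M) : alpha p p x = 0 := by
  simp [alpha]

lemma two_mul_sum_Ioi {M : Type*} [MetricSpace M] {k : ℕ} (f : Fin k → M) :
    2 * ∑ i, ∑ j ∈ Ioi i, dist (f i) (f j) = ∑ i, ∑ j, dist (f i) (f j) := by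
  have h : ∑ i, ∑ j ∈ Ioi i, (dist (f j) (f i) + dist (f i) (f j))
      = ∑ i : Fin k, ∑ j ∈ ({i}ᶜ : Finset (Fin k)), dist (f j) (f i) := by
    convert Finset.sum_sum_Ioi_add_eq_sum_sum_off_diag
      (fun i j => dist (f i) (f j)) using 2 <;> congr!
  calc 2 * ∑ i, ∑ j ∈ Ioi i, dist (f i) (f j)
      = ∑ i, ∑ j ∈ Ioi i, (dist (f j) (f i) + dist (f i) (f j)) := by
        rw [Finset.mul_sum]; congr 1; ext i
        rw [Finset.mul_sum]; congr 1; ext j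
        rw [dist_comm (f j)]; ring
    _ = ∑ i : Fin k, ∑ j ∈ ({i}ᶜ : Finset (Fin k)), dist (f j) (f i) := h
    _ = ∑ i, ∑ j, dist (f i) (f j) := by
        refine Finset.sum_congr rfl fun i _ => ?_
        have h2 := Finset.sum_add_sum_compl ({i} : Finset (Fin k)) (fun j => dist (f j) (f i))
        simp only [Finset.sum_singleton, dist_self, zero_add] at h2
        rw [h2]
        exact Finset.sum_congr rfl fun j _ => dist_comm _ _

lemma sum_update_g {M : Type*} [MetricSpace M] {k : ℕ} (s : Fin k → M) (i1 : Fin k)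
    (x : M) (g : M → ℝ) :
    ∑ i, g (Function.update s i1 x i) = ∑ i, g (s i) + g x - g (s i1) := by
  have : (fun i => g (Function.update s i1 x i))
      = Function.update (fun i => g (s i)) i1 (g x) := by
    funext i
    by_cases hi : i = i1 <;> simp [hi, Function.update_apply]
  rw [this, Finset.sum_update_of_mem (Finset.mem_univ i1)]
  rw [← Finset.add_sum_erase _ _ (Finset.mem_univ i1), Finset.sdiff_singleton_eq_erase]
  ring

lemma key_eq {M : Type*} [MetricSpace M] (s0 s1 r x : M) :
    alpha r s1 x - alpha s0 s1 x = - alpha s0 r x + alpha r s1 s0 := by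
  simp only [alpha]
  rw [dist_comm r s0, dist_comm s1 s0]
  ring

lemma teia_aux {M : Type*} [MetricSpace M] {k : ℕ} (i0 i1 : Fin k) (hne : i1 ≠ i0)
    (s a : Fin k → M) (E : Fin k → ℝ)
    (h : ∀ j : Fin k, j ≠ i0 → s j = a j)
    (hserve : E i1 + dist (s i1) (a i0) ≤ E i0 + dist (s i0) (a i0)) :
    teiaPhi (Function.update s i1 (a i0))
        (Function.update (Function.update a i0 (s i1)) i1 (a i0))
        (fun j => E j + alpha (a i0) (s i1) (s j))
      - teiaPhi s a E + dist (s i1) (a i0) ≤ 0 := by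
  haveI : Nonempty (Fin k) := ⟨i0⟩
  set r := a i0 with hr
  set s0 := s i0 with hs0
  set s1 := s i1 with hs1
  set sh := Function.update s i1 r with hsh
  set ah := Function.update (Function.update a i0 s1) i1 r with hah
  -- basic values
  have hsh_i0 : sh i0 = s0 := by rw [hsh, Function.update_apply, if_neg hne.symm]
  have hsh_i1 : sh i1 = r := by rw [hsh]; simp
  have hsh_ne : ∀ j, j ≠ i1 → sh j = s j := fun j hj => by
    rw [hsh, Function.update_apply, if_neg hj]
  have hah_i0 : ah i0 = s1 := by
    rw [hah, Function.update_apply, if_neg hne.symm, Function.update_apply, if_pos rfl]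
  have hmatch : ∀ l, l ≠ i0 → sh l = ah l := by
    intro l hl
    by_cases hl1 : l = i1
    · subst hl1; rw [hsh_i1, hah]; simp
    · rw [hsh_ne l hl1, hah, Function.update_apply, if_neg hl1,
        Function.update_apply, if_neg hl, h l hl]
  -- epsilon sums
  have eps : ∀ x : M, ∑ l, alpha (s l) (a l) x = alpha s0 r x := by
    intro x
    rw [Finset.sum_eq_single_of_mem i0 (Finset.mem_univ i0)]
    intro l _ hl
    rw [h l hl, alpha_self]
  have epsh : ∀ x : M, ∑ l, alpha (sh l) (ah l) x = alpha s0 s1 x := by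
    intro x
    rw [Finset.sum_eq_single_of_mem i0 (Finset.mem_univ i0), hsh_i0, hah_i0]
    intro l _ hl
    rw [hmatch l hl, alpha_self]
  -- the two suprema
  set Eh : Fin k → ℝ := fun j => E j + alpha r s1 (s j) with hEh
  have bdd_old : BddAbove (Set.range fun j => E j - alpha s0 r (s j)) :=
    Set.Finite.bddAbove (Set.finite_range _)
  set supOld := ⨆ j, (E j - alpha s0 r (s j)) with hsupOld
  set supNew := ⨆ j, (Eh j - alpha s0 s1 (sh j)) with hsupNew
  have hsup : supNew ≤ supOld + alpha r s1 s0 := by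
    rw [hsupNew]
    apply ciSup_le
    intro j
    by_cases hj : j = i1
    · have h1 : Eh i1 - alpha s0 s1 (sh i1) ≤ (E i0 - alpha s0 r s0) + alpha r s1 s0 := by
        rw [hsh_i1]
        show E i1 + alpha r s1 s1 - alpha s0 s1 r ≤ E i0 - alpha s0 r s0 + alpha r s1 s0
        simp only [alpha, dist_self, dist_comm r s0, dist_comm s1 s0, dist_comm s1 r]
        have hs' : E i1 + dist r s1 ≤ E i0 + dist s0 r := by
          rw [dist_comm r s1]; exact hserve
        linarith [hs']
      rw [hj]
      refine h1.trans (add_le_add_left ?_ _)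
      exact le_ciSup bdd_old i0
    · have h1 : Eh j - alpha s0 s1 (sh j) = (E j - alpha s0 r (s j)) + alpha r s1 s0 := by
        rw [hsh_ne j hj]
        show E j + alpha r s1 (s j) - alpha s0 s1 (s j) = E j - alpha s0 r (s j) + alpha r s1 s0
        have := key_eq s0 s1 r (s j)
        linarith [this]
      rw [h1]
      exact add_le_add_left (le_ciSup bdd_old j) _
  -- pair sum difference
  set T : M → ℝ := fun x => ∑ j, dist x (s j) with hT
  have pair_new : ∑ i, ∑ j ∈ Ioi i, dist (sh i) (sh j)
      = ∑ i, ∑ j ∈ Ioi i, dist (s i) (s j) + T r - T s1 - dist r s1 := by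
    have inner : ∀ x : M, ∑ j, dist x (sh j) = T x + dist x r - dist x s1 :=
      fun x => sum_update_g s i1 r (fun y => dist x y)
    have hfull : ∑ i, ∑ j, dist (sh i) (sh j)
        = ∑ i, ∑ j, dist (s i) (s j) + 2 * T r - 2 * T s1 - 2 * dist r s1 := by
      calc ∑ i, ∑ j, dist (sh i) (sh j)
          = ∑ i, (T (sh i) + dist (sh i) r - dist (sh i) s1) :=
            Finset.sum_congr rfl fun i _ => inner (sh i)
        _ = (∑ i, T (sh i)) + (∑ i, dist (sh i) r) - ∑ i, dist (sh i) s1 := by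
            rw [Finset.sum_sub_distrib, Finset.sum_add_distrib]
        _ = ∑ i, ∑ j, dist (s i) (s j) + 2 * T r - 2 * T s1 - 2 * dist r s1 := by
            rw [sum_update_g s i1 r T, sum_update_g s i1 r (fun y => dist y r),
              sum_update_g s i1 r (fun y => dist y s1)]
            have e1 : ∑ i, dist (s i) r = T r :=
              Finset.sum_congr rfl fun i _ => dist_comm _ _
            have e2 : ∑ i, dist (s i) s1 = T s1 :=
              Finset.sum_congr rfl fun i _ => dist_comm _ _
            have e3 : ∑ i, T (s i) = ∑ i, ∑ j, dist (s i) (s j) := rfl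
            rw [e1, e2, e3, dist_self, dist_self, dist_comm s1 r]
            ring
    have h1 := two_mul_sum_Ioi sh
    have h2 := two_mul_sum_Ioi s
    linarith [h1, h2, hfull]
  -- matching sums
  have m_old : ∑ i, dist (s i) (a i) = dist s0 r := by
    rw [Finset.sum_eq_single_of_mem i0 (Finset.mem_univ i0)]
    intro l _ hl
    rw [h l hl, dist_self]
  have m_new : ∑ i, dist (sh i) (ah i) = dist s0 s1 := by
    rw [Finset.sum_eq_single_of_mem i0 (Finset.mem_univ i0), hsh_i0, hah_i0]
    intro l _ hl
    rw [hmatch l hl, dist_self]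
  -- handicap increment sum
  have hSalpha : ∑ i, alpha r s1 (s i) = ((k : ℝ) * dist r s1 + T r - T s1) / 2 := by
    simp only [alpha]
    rw [← Finset.sum_div]
    congr 1
    rw [Finset.sum_sub_distrib, Finset.sum_add_distrib, Finset.sum_const,
      Finset.card_univ, Fintype.card_fin, nsmul_eq_mul]
  -- sup rewrites
  have supOld_eq : (⨆ j, (E j - ∑ l : Fin k, alpha (s l) (a l) (s j))) = supOld := by
    rw [hsupOld]
    congr 1
    funext j
    rw [eps (s j)]
  have supNew_eq : (⨆ j, (E j + alpha r s1 (s j)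
      - ∑ l : Fin k, alpha (sh l) (ah l) (sh j))) = supNew := by
    rw [hsupNew]
    congr 1
    funext j
    rw [epsh (sh j)]
  -- third-term expansions
  have t_old : ∑ i : Fin k, (supOld - E i) = (k : ℝ) * supOld - ∑ i, E i := by
    rw [Finset.sum_sub_distrib, Finset.sum_const, Finset.card_univ,
      Fintype.card_fin, nsmul_eq_mul]
  have t_new : ∑ i : Fin k, (supNew - (E i + alpha r s1 (s i)))
      = (k : ℝ) * supNew - (∑ i, E i) - ∑ i, alpha r s1 (s i) := by
    rw [Finset.sum_sub_distrib, Finset.sum_add_distrib, Finset.sum_const,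
      Finset.card_univ, Fintype.card_fin, nsmul_eq_mul]
    ring
  -- final assembly
  have hsup' : supNew ≤ supOld + (dist r s1 + dist s0 r - dist s0 s1) / 2 := by
    have halpha : alpha r s1 s0 = (dist r s1 + dist s0 r - dist s0 s1) / 2 := by
      simp only [alpha]
      rw [dist_comm r s0, dist_comm s1 s0]
    rw [← halpha]
    exact hsup
  have hk0 : (0 : ℝ) ≤ (k : ℝ) := Nat.cast_nonneg k
  have hmul := mul_le_mul_of_nonneg_left hsup' hk0
  have c1 : dist s1 r = dist r s1 := dist_comm _ _
  simp only [teiaPhi]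
  rw [supOld_eq, supNew_eq, pair_new, m_old, m_new, t_old, t_new, hSalpha]
  nlinarith [hmul, c1]

/-- Update condition for a lazy request served by a matched server: the request
is `r = a_1`, server `2` (which satisfies the HANDICAP selection inequality)
moves to it, the matching is updated to `ŝ_1 = s_1 ↔ â_1 = s_2`,
`ŝ_2 = â_2 = a_1`, `ŝ_j = â_j = s_j` for `j ≥ 3`, and the handicaps are updated
by `Ê_j = E_j + α(a_1; s_2, s_j)`.  Then `ΔΦ + cost_alg ≤ 0`. -/
theorem teiaPhi_lazy_request_matched_server {M : Type*} [MetricSpace M] {k : ℕ}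
    (hk : 2 ≤ k) (s a : Fin k → M) (E : Fin k → ℝ)
    (h : ∀ j : Fin k, j ≠ ⟨0, by omega⟩ → s j = a j)
    (hserve : E ⟨1, hk⟩ + dist (s ⟨1, hk⟩) (a ⟨0, by omega⟩)
        ≤ E ⟨0, by omega⟩ + dist (s ⟨0, by omega⟩) (a ⟨0, by omega⟩)) :
    teiaPhi (Function.update s ⟨1, hk⟩ (a ⟨0, by omega⟩))
        (Function.update (Function.update a ⟨0, by omega⟩ (s ⟨1, hk⟩))
          ⟨1, hk⟩ (a ⟨0, by omega⟩))
        (fun j => E j + alpha (a ⟨0, by omega⟩) (s ⟨1, hk⟩) (s j))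
      - teiaPhi s a E + dist (s ⟨1, hk⟩) (a ⟨0, by omega⟩) ≤ 0 := by
  exact teia_aux ⟨0, by omega⟩ ⟨1, hk⟩ (by simp) s a E h hserve
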